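/- arXiv:2102.11364 — 9 statements merged into one kernel-verified Lean document; each statement's English description precedes it below -/
import Mathlib

section
/- Let (ρ, β₁, β₂, V) be a representation of a BiHom-Lie algebra (A, [·,·], α₁, α₂) such that α₁ and β₂ are bijective. Then the direct sum A ⊕ V is a BiHom-Lie algebra with bracket [x₁+v₁, x₂+v₂] = [x₁,x₂] + ρ(x₁)v₂ − ρ(α₁⁻¹α₂(x₂))β₁β₂⁻¹(v₁) and structure maps α₁⊕β₁, α₂⊕β₂. -/
universe u

section Defs
variable {A : Type*} {V : Type*} [AddCommGroup A] [AddCommGroup V]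

/-- Commuting pair of maps. -/
def BHComm2 (a1 a2 : A → A) : Prop := ∀ x, a1 (a2 x) = a2 (a1 x)

/-- Multiplicativity of a map with respect to a binary operation. -/
def BHMultip (m : A → A → A) (a : A → A) : Prop := ∀ x y, a (m x y) = m (a x) (a y)

/-- BiHom-associative algebra. -/
def BHAssocAlg (m : A → A → A) (a1 a2 : A → A) : Prop :=
  BHComm2 a1 a2 ∧ BHMultip m a1 ∧ BHMultip m a2 ∧
  ∀ x y z, m (a1 x) (m y z) = m (m x y) (a2 z)

/-- Bimodule of a BiHom-associative algebra. -/
def BHAssocBimod (m : A → A → A) (a1 a2 : A → A)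
    (l r : A → V → V) (b1 b2 : V → V) : Prop :=
  BHComm2 b1 b2 ∧
  (∀ x y v, l (m x y) (b2 v) = l (a1 x) (l y v)) ∧
  (∀ x y v, r (m x y) (b1 v) = r (a2 y) (r x v)) ∧
  (∀ x y v, l (a1 x) (r y v) = r (a2 y) (l x v)) ∧
  (∀ x v, b1 (l x v) = l (a1 x) (b1 v)) ∧
  (∀ x v, b1 (r x v) = r (a1 x) (b1 v)) ∧
  (∀ x v, b2 (l x v) = l (a2 x) (b2 v)) ∧
  (∀ x v, b2 (r x v) = r (a2 x) (b2 v))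

/-- BiHom-Lie algebra. -/
def BHLieAlg (br : A → A → A) (a1 a2 : A → A) : Prop :=
  BHComm2 a1 a2 ∧ BHMultip br a1 ∧ BHMultip br a2 ∧
  (∀ x y, br (a2 x) (a1 y) = - br (a2 y) (a1 x)) ∧
  (∀ x y z,
    br (a2 (a2 x)) (br (a2 y) (a1 z)) + br (a2 (a2 z)) (br (a2 x) (a1 y)) +
      br (a2 (a2 y)) (br (a2 z) (a1 x)) = 0)

/-- Representation of a BiHom-Lie algebra. -/
def BHLieRep (br : A → A → A) (a1 a2 : A → A) (ρ : A → V → V) (b1 b2 : V → V) : Prop :=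
  BHComm2 b1 b2 ∧
  (∀ x y v, ρ (br (a2 x) y) (b2 v) = ρ (a1 (a2 x)) (ρ y v) - ρ (a2 y) (ρ (a1 x) v)) ∧
  (∀ x v, b1 (ρ x v) = ρ (a1 x) (b1 v)) ∧
  (∀ x v, b2 (ρ x v) = ρ (a2 x) (b2 v))

/-- BiHom-Leibniz identity. -/
def BHLeibniz (m br : A → A → A) (a1 a2 : A → A) : Prop :=
  ∀ x y z, br (a1 (a2 x)) (m y z) = m (br (a2 x) y) (a2 z) + m (a2 y) (br (a1 x) z)

/-- Noncommutative BiHom-Poisson algebra. -/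
def BHNCPoisson (m br : A → A → A) (a1 a2 : A → A) : Prop :=
  BHAssocAlg m a1 a2 ∧ BHLieAlg br a1 a2 ∧ BHLeibniz m br a1 a2

/-- Representation of a noncommutative BiHom-Poisson algebra. -/
def BHPoissonRep (m br : A → A → A) (a1 a2 : A → A)
    (l r ρ : A → V → V) (b1 b2 : V → V) : Prop :=
  BHAssocBimod m a1 a2 l r b1 b2 ∧ BHLieRep br a1 a2 ρ b1 b2 ∧
  (∀ x y v, l (br (a2 x) y) (b2 v) = ρ (a1 (a2 x)) (l y v) - l (a2 y) (ρ (a1 x) v)) ∧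
  (∀ x y v, r (br (a1 x) y) (b2 v) = ρ (a1 (a2 x)) (r y v) - r (a2 y) (ρ (a2 x) v)) ∧
  (∀ x y v, ρ (m x y) (b1 (b2 v)) = l (a1 x) (ρ y (b1 v)) + r (a1 y) (ρ x (b2 v)))

/-- BiHom-pre-Lie algebra. -/
def BHPreLieAlg (st : A → A → A) (a1 a2 : A → A) : Prop :=
  BHComm2 a1 a2 ∧ BHMultip st a1 ∧ BHMultip st a2 ∧
  ∀ x y z,
    st (st (a2 x) (a1 y)) (a2 z) - st (a1 (a2 x)) (st (a1 y) z) =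
      st (st (a2 y) (a1 x)) (a2 z) - st (a1 (a2 y)) (st (a1 x) z)

/-- Bimodule of a BiHom-pre-Lie algebra. -/
def BHPreLieBimod (st : A → A → A) (a1 a2 : A → A)
    (lst rst : A → V → V) (b1 b2 : V → V) : Prop :=
  BHComm2 b1 b2 ∧
  (∀ x y v, lst (st (a2 x) (a1 y) - st (a2 y) (a1 x)) (b2 v) =
      lst (a1 (a2 x)) (lst (a1 y) v) - lst (a1 (a2 y)) (lst (a1 x) v)) ∧
  (∀ x y v, rst (a2 y) (lst (a2 x) (b1 v) - rst (a1 x) (b2 v)) =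
      lst (a1 (a2 x)) (rst y (b1 v)) - rst (st (a1 x) y) (b1 (b2 v))) ∧
  (∀ x v, b1 (lst x v) = lst (a1 x) (b1 v)) ∧
  (∀ x v, b1 (rst x v) = rst (a1 x) (b1 v)) ∧
  (∀ x v, b2 (lst x v) = lst (a2 x) (b2 v)) ∧
  (∀ x v, b2 (rst x v) = rst (a2 x) (b2 v))

/-- BiHom-dendriform algebra. -/
def BHDendAlg (p s : A → A → A) (a1 a2 : A → A) : Prop :=
  BHComm2 a1 a2 ∧ BHMultip p a1 ∧ BHMultip p a2 ∧ BHMultip s a1 ∧ BHMultip s a2 ∧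
  (∀ x y z, p (p x y) (a2 z) = p (a1 x) (p y z + s y z)) ∧
  (∀ x y z, p (s x y) (a2 z) = s (a1 x) (p y z)) ∧
  (∀ x y z, s (a1 x) (s y z) = s (p x y + s x y) (a2 z))

/-- Bimodule of a BiHom-dendriform algebra. -/
def BHDendBimod (p s : A → A → A) (a1 a2 : A → A)
    (lp rp ls rs : A → V → V) (b1 b2 : V → V) : Prop :=
  BHComm2 b1 b2 ∧
  (∀ x y v, lp (p x y) (b2 v) = lp (a1 x) (lp y v + ls y v)) ∧
  (∀ x y v, rp (a2 x) (lp y v) = lp (a1 y) (rp x v + rs x v)) ∧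
  (∀ x y v, rp (a2 y) (rp x v) = rp (p x y + s x y) (b1 v)) ∧
  (∀ x y v, lp (s x y) (b2 v) = ls (a1 x) (lp y v)) ∧
  (∀ x y v, rp (a2 x) (ls y v) = ls (a1 y) (rp x v)) ∧
  (∀ x y v, rp (a2 x) (rs y v) = rs (p y x) (b1 v)) ∧
  (∀ x y v, ls (p x y + s x y) (b2 v) = ls (a1 x) (ls y v)) ∧
  (∀ x y v, rs (a2 x) (lp y v + ls y v) = ls (a1 y) (rs x v)) ∧
  (∀ x y v, rs (a2 x) (rp y v + rs y v) = rs (s y x) (b1 v)) ∧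
  (∀ x v, b1 (lp x v) = lp (a1 x) (b1 v)) ∧
  (∀ x v, b1 (rp x v) = rp (a1 x) (b1 v)) ∧
  (∀ x v, b2 (lp x v) = lp (a2 x) (b2 v)) ∧
  (∀ x v, b2 (rp x v) = rp (a2 x) (b2 v)) ∧
  (∀ x v, b1 (ls x v) = ls (a1 x) (b1 v)) ∧
  (∀ x v, b1 (rs x v) = rs (a1 x) (b1 v)) ∧
  (∀ x v, b2 (ls x v) = ls (a2 x) (b2 v)) ∧
  (∀ x v, b2 (rs x v) = rs (a2 x) (b2 v))

/-- The three compatibility conditions of a noncommutative BiHom-pre-Poisson algebra. -/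
def BHPPCompat (p s st : A → A → A) (a1 a2 : A → A) : Prop :=
  (∀ x y z, p (st (a2 x) (a1 y) - st (a2 y) (a1 x)) (a2 z) =
      st (a1 (a2 x)) (p (a1 y) z) - p (a1 (a2 y)) (st (a1 x) z)) ∧
  (∀ x y z, s (a2 x) (st (a1 (a2 y)) (a1 z) - st (a2 z) (a1 (a1 y))) =
      st (a1 (a2 (a2 y))) (s x (a1 z)) - s (st (a2 (a2 y)) x) (a1 (a2 z))) ∧
  (∀ x y z, st (p (a2 x) (a1 y) + s (a2 x) (a1 y)) (a2 z) =
      s (st (a2 x) (a1 z)) (a2 y) + p (a1 (a2 x)) (st (a1 y) z))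

/-- Noncommutative BiHom-pre-Poisson algebra. -/
def BHPrePoisson (p s st : A → A → A) (a1 a2 : A → A) : Prop :=
  BHDendAlg p s a1 a2 ∧ BHPreLieAlg st a1 a2 ∧ BHPPCompat p s st a1 a2

/-- Bimodule of a noncommutative BiHom-pre-Poisson algebra. -/
def BHPrePoissonBimod (p s st : A → A → A) (a1 a2 : A → A)
    (lp rp ls rs lst rst : A → V → V) (b1 b2 : V → V) : Prop :=
  BHPreLieBimod st a1 a2 lst rst b1 b2 ∧
  BHDendBimod p s a1 a2 lp rp ls rs b1 b2 ∧
  (∀ x y v, lp (st (a2 x) (a1 y) - st (a2 y) (a1 x)) (b2 v) =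
      lst (a1 (a2 x)) (lp (a1 y) v) - lp (a1 (a2 y)) (lst (a1 x) v)) ∧
  (∀ x y v, rp (a2 x) (lst (a2 y) (b1 v) - rst (a1 y) (b2 v)) =
      lst (a1 (a2 y)) (rp x (b1 v)) - rp (st (a1 y) x) (b1 (b2 v))) ∧
  (∀ x y v, - rp (a2 x) (lst (a2 y) (b1 v) - rst (a1 y) (b2 v)) =
      rst (p (a1 y) x) (b1 (b2 v)) - lp (a1 (a2 y)) (rst x (b1 v))) ∧
  (∀ x y v, ls (a2 x) (lst (a1 (a2 y)) (b1 v) - rst (a1 (a1 y)) (b2 v)) =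
      lst (a1 (a2 (a2 y))) (ls x (b1 v)) - ls (st (a2 (a2 y)) x) (b1 (b2 v))) ∧
  (∀ x y v, rs (st (a2 (a1 x)) (a1 y) - st (a2 y) (a1 (a1 x))) (b2 v) =
      lst (a1 (a2 (a2 x))) (rs (a1 y) v) - rs (a1 (a2 y)) (lst (a2 (a2 x)) v)) ∧
  (∀ x y v, - ls (a2 x) (lst (a2 y) (b1 (b1 v)) - rst (a1 y) (b2 (b1 v))) =
      rst (s x (a1 y)) (b1 (b2 (b2 v))) - rs (a1 (a2 y)) (rst x (b2 (b2 v)))) ∧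
  (∀ x y v, lst (p (a2 x) (a1 y) + s (a2 x) (a1 y)) (b2 v) =
      rs (a2 y) (lst (a2 x) (b1 v)) + lp (a1 (a2 x)) (lst (a1 y) v)) ∧
  (∀ x y v, rst (a2 x) (lp (a2 y) (b1 v) + ls (a2 y) (b1 v)) =
      ls (st (a2 y) (a1 x)) (b2 v) + lp (a1 (a2 y)) (rst x (b1 v))) ∧
  (∀ x y v, rst (a2 x) (rp (a1 y) (b2 v) + rs (a1 y) (b2 v)) =
      rs (a2 y) (rst (a1 x) (b2 v)) + rp (st (a1 y) x) (b1 (b2 v)))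

end Defs

theorem stmt_1 {K A V : Type*} [Field K] [AddCommGroup A] [Module K A]
    [AddCommGroup V] [Module K V]
    (br : A →ₗ[K] A →ₗ[K] A) (a1 a2 a1inv : A →ₗ[K] A)
    (ρ : A →ₗ[K] V →ₗ[K] V) (b1 b2 b2inv : V →ₗ[K] V)
    (hA : BHLieAlg (fun x y => br x y) (fun x => a1 x) (fun x => a2 x))
    (hrep : BHLieRep (fun x y => br x y) (fun x => a1 x) (fun x => a2 x)
      (fun x v => ρ x v) (fun v => b1 v) (fun v => b2 v))
    (ha1l : ∀ x, a1inv (a1 x) = x) (ha1r : ∀ x, a1 (a1inv x) = x)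
    (hb2l : ∀ v, b2inv (b2 v) = v) (hb2r : ∀ v, b2 (b2inv v) = v) :
    BHLieAlg
      (fun p q : A × V =>
        (br p.1 q.1, ρ p.1 q.2 - ρ (a1inv (a2 q.1)) (b1 (b2inv p.2))))
      (fun p => (a1 p.1, b1 p.2)) (fun p => (a2 p.1, b2 p.2)) := by
  obtain ⟨hcA, hm1, hm2, hskew, hjac⟩ := hA
  obtain ⟨hcb, hρ, hb1, hb2⟩ := hrep
  simp only [BHComm2, BHMultip] at hcA hcb hm1 hm2
  beta_reduce at hskew hjac hρ hb1 hb2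
  have h1 : ∀ x, a1inv (a2 (a1 x)) = a2 x := fun x => by rw [← hcA, ha1l]
  have h5 : ∀ x, a2 (a1inv x) = a1inv (a2 x) := fun x => by
    conv_rhs => rw [← ha1r x]
    rw [← hcA, ha1l]
  have h4 : ∀ v, b2inv (b1 v) = b1 (b2inv v) := fun v => by
    conv_lhs => rw [← hb2r v, hcb, hb2l]
  have hinvm : ∀ p q, a1inv (br p q) = br (a1inv p) (a1inv q) := fun p q => by
    conv_lhs => rw [← ha1r p, ← ha1r q, ← hm1, ha1l]
  have hkey : ∀ y z u, ρ (a1inv (a2 (br (a2 y) (a1 z)))) (b1 (b2 u)) =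
      ρ (a2 (a2 y)) (ρ (a2 z) (b1 u)) - ρ (a2 (a2 z)) (ρ (a2 y) (b1 u)) := by
    intro y z u
    have e1 : a1inv (a2 (br (a2 y) (a1 z))) = br (a2 (a1inv (a2 y))) (a2 z) := by
      rw [hm2, ← hcA z, hinvm, ha1l, ← h5]
    rw [e1, hcb, hρ, h5, ha1r, ha1r]
  refine ⟨fun p => Prod.ext (hcA p.1) (hcb p.2), ?_, ?_, ?_, ?_⟩
  · intro p q
    refine Prod.ext (hm1 p.1 q.1) ?_
    simp only [map_sub, hb1, ha1r, h1, h4]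
  · intro p q
    refine Prod.ext (hm2 p.1 q.1) ?_
    simp only [map_sub, hb2, ← h5, ← hcb, hb2l, hb2r]
  · intro p q
    refine Prod.ext (hskew p.1 q.1) ?_
    simp only [Prod.snd_neg, h1, hb2l]
    abel
  · intro p q r
    have jac := hjac p.1 q.1 r.1
    refine Prod.ext ?_ ?_
    · simpa using jac
    · simp only [Prod.snd_add, Prod.snd_zero, h1, hb2l, map_sub, hkey]
      abel
end

section
/- Let (A, ∗, α₁, α₂) be a regular BiHom-pre-Lie algebra (i.e., α₁ and α₂ are bijective). Then (A, [·,·], α₁, α₂) is a BiHom-Lie algebra, where [x,y] = x∗y − α₁⁻¹α₂(y) ∗ α₁α₂⁻¹(x). -/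
universe u

theorem stmt_2 {K A : Type*} [Field K] [AddCommGroup A] [Module K A]
    (st : A →ₗ[K] A →ₗ[K] A) (a1 a2 a1inv a2inv : A →ₗ[K] A)
    (hA : BHPreLieAlg (fun x y => st x y) (fun x => a1 x) (fun x => a2 x))
    (ha1l : ∀ x, a1inv (a1 x) = x) (ha1r : ∀ x, a1 (a1inv x) = x)
    (ha2l : ∀ x, a2inv (a2 x) = x) (ha2r : ∀ x, a2 (a2inv x) = x) :
    BHLieAlg (fun x y => st x y - st (a1inv (a2 y)) (a1 (a2inv x)))
      (fun x => a1 x) (fun x => a2 x) := by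

  obtain ⟨hc0, h10, h20, hpl⟩ := hA
  have hc : ∀ x, a1 (a2 x) = a2 (a1 x) := hc0
  have h1 : ∀ x y, a1 (st x y) = st (a1 x) (a1 y) := h10
  have h2 : ∀ x y, a2 (st x y) = st (a2 x) (a2 y) := h20
  have c12 : ∀ x, a1inv (a2 x) = a2 (a1inv x) := by
    intro x
    have h := hc (a1inv x)
    rw [ha1r] at h
    rw [← h, ha1l]
  have c21 : ∀ x, a2inv (a1 x) = a1 (a2inv x) := by
    intro x
    have h := hc (a2inv x)
    rw [ha2r] at h
    rw [h, ha2l]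
  have hi1 : ∀ x y, a1inv (st x y) = st (a1inv x) (a1inv y) := by
    intro x y
    conv_lhs => rw [← ha1r x, ← ha1r y, ← h1, ha1l]
  refine ⟨hc0, ?_, ?_, ?_, ?_⟩
  · intro x y
    simp only [map_sub, LinearMap.sub_apply, h1, ← hc, ha1l, ha1r, c21]
  · intro x y
    simp only [map_sub, LinearMap.sub_apply, h2, ← c12, ← hc, ha2r, ha2l]
  · intro x y
    simp only [← hc, ha1l, ha2l]
    abel
  · intro x y z
    simp only []
    have brA : ∀ u v, st (a2 u) (a1 v) - st (a1inv (a2 (a1 v))) (a1 (a2inv (a2 u))) =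
        st (a2 u) (a1 v) - st (a2 v) (a1 u) := by
      intro u v
      rw [← hc, ha1l, ha2l]
    have hpl' : ∀ u v w, st (st (a1inv (a2 (a2 u))) (a2 v)) (a1 (a2 w)) =
        st (a2 (a2 u)) (st (a2 v) (a1 w)) +
          st (st (a1inv (a2 (a2 v))) (a2 u)) (a1 (a2 w)) -
          st (a2 (a2 v)) (st (a2 u) (a1 w)) := by
      intro u v w
      have h := hpl (a1inv (a2 u)) (a1inv (a2 v)) (a1 w)
      simp only [ha1r, ← c12, ← hc] at h
      rw [sub_eq_iff_eq_add] at h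
      rw [h]
      abel
    have key : ∀ u v w, st (a2 (a2 u)) (st (a2 v) (a1 w) - st (a2 w) (a1 v)) -
        st (a1inv (a2 (st (a2 v) (a1 w) - st (a2 w) (a1 v)))) (a1 (a2inv (a2 (a2 u)))) =
        st (a2 (a2 u)) (st (a2 v) (a1 w)) - st (a2 (a2 u)) (st (a2 w) (a1 v)) -
        st (a2 (a2 v)) (st (a2 w) (a1 u)) + st (a2 (a2 w)) (st (a2 v) (a1 u)) := by
      intro u v w
      rw [ha2l]
      simp only [map_sub, LinearMap.sub_apply, h2, hi1, ← hc, ha1l]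
      rw [hpl' v w u]
      abel
    rw [brA y z, brA z x, brA x y]
    rw [key x y z, key z x y, key y z x]
    abel
end

section
/- Let (A, ≺, ≻, α₁, α₂) be a BiHom-dendriform algebra. Then (A, ·, α₁, α₂) with x·y := x≺y + x≻y is a BiHom-associative algebra. -/
universe u

theorem stmt_4 {K A : Type*} [Field K] [AddCommGroup A] [Module K A]
    (p s : A →ₗ[K] A →ₗ[K] A) (a1 a2 : A →ₗ[K] A)
    (hA : BHDendAlg (fun x y => p x y) (fun x y => s x y) (fun x => a1 x) (fun x => a2 x)) :
    BHAssocAlg (fun x y => p x y + s x y) (fun x => a1 x) (fun x => a2 x) := by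

  obtain ⟨hc, hp1, hp2, hs1, hs2, h1, h2, h3⟩ := hA
  refine ⟨hc, ?_, ?_, ?_⟩
  · intro x y; simp only [BHMultip] at hp1 hs1
    simp only [map_add, hp1 x y, hs1 x y]
  · intro x y; simp only [BHMultip] at hp2 hs2
    simp only [map_add, hp2 x y, hs2 x y]
  · intro x y z
    simp only [map_add, LinearMap.add_apply]
    have e1 := h1 x y z
    have e2 := h2 x y z
    have e3 := h3 x y z
    simp only [map_add, LinearMap.add_apply] at e1 e2 e3
    linear_combination (norm := abel) e3 - e1 - e2
end

section
/- Let (l≺, r≺, l≻, r≻, β₁, β₂, V) be a bimodule of a BiHom-dendriform algebra (A, ≺, ≻, α₁, α₂). Then (l≺ + l≻, r≺ + r≻, β₁, β₂, V) is a bimodule of the associated BiHom-associative algebra (A, · = ≺+≻, α₁, α₂). -/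
universe u

theorem stmt_5 {K A V : Type*} [Field K] [AddCommGroup A] [Module K A]
    [AddCommGroup V] [Module K V]
    (p s : A →ₗ[K] A →ₗ[K] A) (a1 a2 : A →ₗ[K] A)
    (lp rp ls rs : A →ₗ[K] V →ₗ[K] V) (b1 b2 : V →ₗ[K] V)
    (hA : BHDendAlg (fun x y => p x y) (fun x y => s x y) (fun x => a1 x) (fun x => a2 x))
    (hbim : BHDendBimod (fun x y => p x y) (fun x y => s x y) (fun x => a1 x) (fun x => a2 x)
      (fun x v => lp x v) (fun x v => rp x v) (fun x v => ls x v) (fun x v => rs x v) (fun v => b1 v) (fun v => b2 v)) :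
    BHAssocBimod (fun x y => p x y + s x y) (fun x => a1 x) (fun x => a2 x)
      (fun x v => lp x v + ls x v) (fun x v => rp x v + rs x v)
      (fun v => b1 v) (fun v => b2 v) := by
  obtain ⟨hc, h1, h2, h3, h4, h5, h6, h7, h8, h9, i1, i2, i3, i4, i5, i6, i7, i8⟩ := hbim
  refine ⟨hc, ?_, ?_, ?_, ?_, ?_, ?_, ?_⟩
  · intro x y v
    have e1 := h1 x y v
    have e2 := h4 x y v
    have e3 := h7 x y v
    simp only [map_add, LinearMap.add_apply] at *
    rw [e1, e2, e3]; abel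
  · intro x y v
    have e1 := h3 x y v
    have e2 := h6 y x v
    have e3 := h9 y x v
    simp only [map_add, LinearMap.add_apply] at *
    rw [e1, e2, e3]; abel
  · intro x y v
    have e1 := h2 y x v
    have e2 := h5 y x v
    have e3 := h8 y x v
    simp only [map_add, LinearMap.add_apply] at *
    rw [e1, e2, e3]; abel
  · intro x v; simp only [map_add, i1, i5]
  · intro x v; simp only [map_add, i2, i6]
  · intro x v; simp only [map_add, i3, i7]
  · intro x v; simp only [map_add, i4, i8]
end

section
/- Let (l≺, r≺, l≻, r≻, β₁, β₂, V) be a bimodule of a BiHom-dendriform algebra (A, ≺, ≻, α₁, α₂). Then A ⊕ V carries a BiHom-dendriform algebra structure given by (x+u)≺'(y+v) = x≺y + l≺(x)v + r≺(y)u and (x+u)≻'(y+v) = x≻y + l≻(x)v + r≻(y)u, with structure maps α₁⊕β₁ and α₂⊕β₂. -/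
universe u

theorem stmt_6 {K A V : Type*} [Field K] [AddCommGroup A] [Module K A]
    [AddCommGroup V] [Module K V]
    (p s : A →ₗ[K] A →ₗ[K] A) (a1 a2 : A →ₗ[K] A)
    (lp rp ls rs : A →ₗ[K] V →ₗ[K] V) (b1 b2 : V →ₗ[K] V)
    (hA : BHDendAlg (fun x y => p x y) (fun x y => s x y) (fun x => a1 x) (fun x => a2 x))
    (hbim : BHDendBimod (fun x y => p x y) (fun x y => s x y) (fun x => a1 x) (fun x => a2 x)
      (fun x v => lp x v) (fun x v => rp x v) (fun x v => ls x v) (fun x v => rs x v) (fun v => b1 v) (fun v => b2 v)) :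
    BHDendAlg
      (fun q w : A × V => (p q.1 w.1, lp q.1 w.2 + rp w.1 q.2))
      (fun q w : A × V => (s q.1 w.1, ls q.1 w.2 + rs w.1 q.2))
      (fun q => (a1 q.1, b1 q.2)) (fun q => (a2 q.1, b2 q.2)) := by
  obtain ⟨hc, hp1, hp2, hs1, hs2, hD1, hD2, hD3⟩ := hA
  obtain ⟨hbc, B1, B2, B3, B4, B5, B6, B7, B8, B9, I1, I2, I3, I4, I5, I6, I7, I8⟩ := hbim
  have B1' : ∀ x y v, lp (p x y) (b2 v) = lp (a1 x) (lp y v) + lp (a1 x) (ls y v) :=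
    fun x y v => by simpa [map_add] using B1 x y v
  have B2' : ∀ x y v, rp (a2 x) (lp y v) = lp (a1 y) (rp x v) + lp (a1 y) (rs x v) :=
    fun x y v => by simpa [map_add] using B2 x y v
  have B3' : ∀ x y v, rp (a2 y) (rp x v) = rp (p x y) (b1 v) + rp (s x y) (b1 v) :=
    fun x y v => by simpa [map_add] using B3 x y v
  have B4' : ∀ x y v, lp (s x y) (b2 v) = ls (a1 x) (lp y v) :=
    fun x y v => by simpa using B4 x y v
  have B5' : ∀ x y v, rp (a2 x) (ls y v) = ls (a1 y) (rp x v) :=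
    fun x y v => by simpa using B5 x y v
  have B6' : ∀ x y v, rp (a2 x) (rs y v) = rs (p y x) (b1 v) :=
    fun x y v => by simpa using B6 x y v
  have B7' : ∀ x y v, ls (p x y) (b2 v) + ls (s x y) (b2 v) = ls (a1 x) (ls y v) :=
    fun x y v => by simpa [map_add] using B7 x y v
  have B8' : ∀ x y v, rs (a2 x) (lp y v) + rs (a2 x) (ls y v) = ls (a1 y) (rs x v) :=
    fun x y v => by simpa [map_add] using B8 x y v
  have B9' : ∀ x y v, rs (a2 x) (rp y v) + rs (a2 x) (rs y v) = rs (s y x) (b1 v) :=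
    fun x y v => by simpa [map_add] using B9 x y v
  refine ⟨fun q => ?_, fun q w => ?_, fun q w => ?_, fun q w => ?_, fun q w => ?_,
    fun x y z => ?_, fun x y z => ?_, fun x y z => ?_⟩
  · exact Prod.ext (hc q.1) (hbc q.2)
  · exact Prod.ext (hp1 q.1 w.1) (by simp only [map_add, I1, I2])
  · exact Prod.ext (hp2 q.1 w.1) (by simp only [map_add, I3, I4])
  · exact Prod.ext (hs1 q.1 w.1) (by simp only [map_add, I5, I6])
  · exact Prod.ext (hs2 q.1 w.1) (by simp only [map_add, I7, I8])
  · refine Prod.ext (hD1 x.1 y.1 z.1) ?_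
    simp only [map_add, LinearMap.add_apply, Prod.fst_add, Prod.snd_add]
    rw [B1' x.1 y.1 z.2, B2' z.1 x.1 y.2, B3' y.1 z.1 x.2]; abel
  · refine Prod.ext (hD2 x.1 y.1 z.1) ?_
    simp only [map_add, LinearMap.add_apply, Prod.fst_add, Prod.snd_add]
    rw [B4' x.1 y.1 z.2, B5' z.1 x.1 y.2, B6' z.1 y.1 x.2]; abel
  · refine Prod.ext (hD3 x.1 y.1 z.1) ?_
    simp only [map_add, LinearMap.add_apply, Prod.fst_add, Prod.snd_add]
    rw [← B7' x.1 y.1 z.2, ← B8' z.1 x.1 y.2, ← B9' z.1 y.1 x.2]; abel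
end

section
/- Let (A, ·, α₁, α₂) be a regular BiHom-associative algebra (α₁, α₂ bijective). Then (A, ·, {·,·}, α₁, α₂) with {x,y} := x·y − α₁⁻¹α₂(y)·α₁α₂⁻¹(x) is a noncommutative BiHom-Poisson algebra. -/
universe u

theorem stmt_7 {K A : Type*} [Field K] [AddCommGroup A] [Module K A]
    (mul : A →ₗ[K] A →ₗ[K] A) (a1 a2 a1inv a2inv : A →ₗ[K] A)
    (hA : BHAssocAlg (fun x y => mul x y) (fun x => a1 x) (fun x => a2 x))
    (ha1l : ∀ x, a1inv (a1 x) = x) (ha1r : ∀ x, a1 (a1inv x) = x)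
    (ha2l : ∀ x, a2inv (a2 x) = x) (ha2r : ∀ x, a2 (a2inv x) = x) :
    BHNCPoisson (fun x y => mul x y)
      (fun x y => mul x y - mul (a1inv (a2 y)) (a1 (a2inv x)))
      (fun x => a1 x) (fun x => a2 x) := by
  obtain ⟨hcomm, hm1, hm2, hassoc⟩ := hA
  simp only [BHComm2, BHMultip] at hcomm hm1 hm2
  have i1_2 : ∀ x, a1inv (a2 x) = a2 (a1inv x) := fun x => by
    calc a1inv (a2 x) = a1inv (a2 (a1 (a1inv x))) := by rw [ha1r]
      _ = a1inv (a1 (a2 (a1inv x))) := by rw [hcomm]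
      _ = a2 (a1inv x) := ha1l _
  have i2_1 : ∀ x, a2inv (a1 x) = a1 (a2inv x) := fun x => by
    calc a2inv (a1 x) = a2inv (a1 (a2 (a2inv x))) := by rw [ha2r]
      _ = a2inv (a2 (a1 (a2inv x))) := by rw [hcomm]
      _ = a1 (a2inv x) := ha2l _
  have iinv : ∀ x, a1inv (a2inv x) = a2inv (a1inv x) := fun x => by
    calc a1inv (a2inv x) = a1inv (a2inv (a1 (a1inv x))) := by rw [ha1r]
      _ = a1inv (a1 (a2inv (a1inv x))) := by rw [i2_1]
      _ = a2inv (a1inv x) := ha1l _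
  have i2_1' : ∀ x, a1 (a2inv x) = a2inv (a1 x) := fun x => (i2_1 x).symm
  have minv1 : ∀ x y, a1inv (mul x y) = mul (a1inv x) (a1inv y) := fun x y => by
    calc a1inv (mul x y) = a1inv (mul (a1 (a1inv x)) (a1 (a1inv y))) := by rw [ha1r, ha1r]
      _ = a1inv (a1 (mul (a1inv x) (a1inv y))) := by rw [hm1]
      _ = mul (a1inv x) (a1inv y) := ha1l _
  have minv2 : ∀ x y, a2inv (mul x y) = mul (a2inv x) (a2inv y) := fun x y => by
    calc a2inv (mul x y) = a2inv (mul (a2 (a2inv x)) (a2 (a2inv y))) := by rw [ha2r, ha2r]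
      _ = a2inv (a2 (mul (a2inv x) (a2inv y))) := by rw [hm2]
      _ = mul (a2inv x) (a2inv y) := ha2l _
  have assoc' : ∀ x y z, mul (mul x y) z = mul (a1 x) (mul y (a2inv z)) := fun x y z => by
    conv_lhs => rw [← ha2r z]
    exact (hassoc x y (a2inv z)).symm
  refine ⟨⟨hcomm, hm1, hm2, hassoc⟩, ⟨hcomm, ?_, ?_, ?_, ?_⟩, ?_⟩
  · intro x y
    simp only [ha1l, ha1r, ha2l, ha2r, hcomm, i1_2, i2_1', iinv, hm1, hm2, minv1, minv2,
      assoc', map_sub, LinearMap.sub_apply]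
    try abel
  · intro x y
    simp only [ha1l, ha1r, ha2l, ha2r, hcomm, i1_2, i2_1', iinv, hm1, hm2, minv1, minv2,
      assoc', map_sub, LinearMap.sub_apply]
    try abel
  · intro x y
    simp only [ha1l, ha1r, ha2l, ha2r, hcomm, i1_2, i2_1', iinv, hm1, hm2, minv1, minv2,
      assoc', map_sub, LinearMap.sub_apply]
    try abel
  · intro x y z
    simp only [ha1l, ha1r, ha2l, ha2r, hcomm, i1_2, i2_1', iinv, hm1, hm2, minv1, minv2,
      assoc', map_sub, LinearMap.sub_apply]
    try abel
  · intro x y z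
    simp only [ha1l, ha1r, ha2l, ha2r, hcomm, i1_2, i2_1', iinv, hm1, hm2, minv1, minv2,
      assoc', map_sub, LinearMap.sub_apply]
    try abel
end

section
/- Let (l≺, r≺, l≻, r≻, l∗, r∗, β₁, β₂, V) be a bimodule of a noncommutative BiHom-pre-Poisson algebra (A, ≺, ≻, ∗, α₁, α₂). Then A ⊕ V with (x+u)≺'(y+v) = x≺y + l≺(x)v + r≺(y)u, (x+u)≻'(y+v) = x≻y + l≻(x)v + r≻(y)u, (x+u)∗'(y+v) = x∗y + l∗(x)v + r∗(y)u, and structure maps α₁⊕β₁, α₂⊕β₂, is a noncommutative BiHom-pre-Poisson algebra. -/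
universe u

theorem stmt_13 {K A V : Type*} [Field K] [AddCommGroup A] [Module K A]
    [AddCommGroup V] [Module K V]
    (p s st : A →ₗ[K] A →ₗ[K] A) (a1 a2 : A →ₗ[K] A)
    (lp rp ls rs lst rst : A →ₗ[K] V →ₗ[K] V) (b1 b2 : V →ₗ[K] V)
    (hPP : BHPrePoisson (fun x y => p x y) (fun x y => s x y) (fun x y => st x y) (fun x => a1 x) (fun x => a2 x))
    (hbim : BHPrePoissonBimod (fun x y => p x y) (fun x y => s x y) (fun x y => st x y) (fun x => a1 x) (fun x => a2 x)
      (fun x v => lp x v) (fun x v => rp x v) (fun x v => ls x v) (fun x v => rs x v) (fun x v => lst x v) (fun x v => rst x v)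
      (fun v => b1 v) (fun v => b2 v)) :
    BHPrePoisson
      (fun q w : A × V => (p q.1 w.1, lp q.1 w.2 + rp w.1 q.2))
      (fun q w : A × V => (s q.1 w.1, ls q.1 w.2 + rs w.1 q.2))
      (fun q w : A × V => (st q.1 w.1, lst q.1 w.2 + rst w.1 q.2))
      (fun q => (a1 q.1, b1 q.2)) (fun q => (a2 q.1, b2 q.2)) := by
  obtain ⟨hDend, hPre, hComp⟩ := hPP
  obtain ⟨hC, hMp1, hMp2, hMs1, hMs2, hD1, hD2, hD3⟩ := hDend
  obtain ⟨-, hMst1, hMst2, hPL⟩ := hPre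
  obtain ⟨hC1, hC2, hC3⟩ := hComp
  obtain ⟨hPLB, hDB, hP1, hP2, hP3, hP4, hP5, hP6, hP7, hP8, hP9⟩ := hbim
  obtain ⟨hbC, hL2, hL3, hq1, hq2, hq3, hq4⟩ := hPLB
  obtain ⟨-, hd1, hd2, hd3, hd4, hd5, hd6, hd7, hd8, hd9,
    hm1, hm2, hm3, hm4, hm5, hm6, hm7, hm8⟩ := hDB
  have hC' : ∀ x : A, a1 (a2 x) = a2 (a1 x) := hC
  have hbC' : ∀ v : V, b1 (b2 v) = b2 (b1 v) := hbC
  refine ⟨⟨?_, ?_, ?_, ?_, ?_, ?_, ?_, ?_⟩, ⟨?_, ?_, ?_, ?_⟩, ?_, ?_, ?_⟩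
  · intro x
    simp only [Prod.mk.injEq]
    exact ⟨hC x.1, hbC x.2⟩
  · intro x y
    simp only [Prod.mk.injEq, map_add]
    refine ⟨hMp1 x.1 y.1, ?_⟩
    linear_combination (norm := module) hm1 x.1 y.2 + hm2 y.1 x.2
  · intro x y
    simp only [Prod.mk.injEq, map_add]
    refine ⟨hMp2 x.1 y.1, ?_⟩
    linear_combination (norm := module) hm3 x.1 y.2 + hm4 y.1 x.2
  · intro x y
    simp only [Prod.mk.injEq, map_add]
    refine ⟨hMs1 x.1 y.1, ?_⟩
    linear_combination (norm := module) hm5 x.1 y.2 + hm6 y.1 x.2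
  · intro x y
    simp only [Prod.mk.injEq, map_add]
    refine ⟨hMs2 x.1 y.1, ?_⟩
    linear_combination (norm := module) hm7 x.1 y.2 + hm8 y.1 x.2
  · intro x y z
    have g := hD1 x.1 y.1 z.1
    have h1 := hd1 x.1 y.1 z.2
    have h2 := hd2 z.1 x.1 y.2
    have h3 := hd3 y.1 z.1 x.2
    simp only [map_add, map_sub, map_neg, LinearMap.add_apply, LinearMap.sub_apply,
      LinearMap.neg_apply, Prod.fst_add, Prod.snd_add, Prod.fst_sub, Prod.snd_sub,
      Prod.fst_neg, Prod.snd_neg, Prod.mk_add_mk, Prod.mk_sub_mk, Prod.neg_mk, Prod.mk.injEq, hC', hbC'] at g h1 h2 h3 ⊢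
    refine ⟨?_, ?_⟩
    · linear_combination (norm := module) g
    · linear_combination (norm := module) h1 + h2 + h3
  · intro x y z
    have g := hD2 x.1 y.1 z.1
    have h1 := hd4 x.1 y.1 z.2
    have h2 := hd5 z.1 x.1 y.2
    have h3 := hd6 z.1 y.1 x.2
    simp only [map_add, map_sub, map_neg, LinearMap.add_apply, LinearMap.sub_apply,
      LinearMap.neg_apply, Prod.fst_add, Prod.snd_add, Prod.fst_sub, Prod.snd_sub,
      Prod.fst_neg, Prod.snd_neg, Prod.mk_add_mk, Prod.mk_sub_mk, Prod.neg_mk, Prod.mk.injEq, hC', hbC'] at g h1 h2 h3 ⊢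
    refine ⟨?_, ?_⟩
    · linear_combination (norm := module) g
    · linear_combination (norm := module) h1 + h2 + h3
  · intro x y z
    have g := hD3 x.1 y.1 z.1
    have h1 := hd7 x.1 y.1 z.2
    have h2 := hd8 z.1 x.1 y.2
    have h3 := hd9 z.1 y.1 x.2
    simp only [map_add, map_sub, map_neg, LinearMap.add_apply, LinearMap.sub_apply,
      LinearMap.neg_apply, Prod.fst_add, Prod.snd_add, Prod.fst_sub, Prod.snd_sub,
      Prod.fst_neg, Prod.snd_neg, Prod.mk_add_mk, Prod.mk_sub_mk, Prod.neg_mk, Prod.mk.injEq, hC', hbC'] at g h1 h2 h3 ⊢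
    refine ⟨?_, ?_⟩
    · linear_combination (norm := module) g
    · linear_combination (norm := module) -h1 - h2 - h3
  · intro x
    simp only [Prod.mk.injEq]
    exact ⟨hC x.1, hbC x.2⟩
  · intro x y
    simp only [Prod.mk.injEq, map_add]
    refine ⟨hMst1 x.1 y.1, ?_⟩
    linear_combination (norm := module) hq1 x.1 y.2 + hq2 y.1 x.2
  · intro x y
    simp only [Prod.mk.injEq, map_add]
    refine ⟨hMst2 x.1 y.1, ?_⟩
    linear_combination (norm := module) hq3 x.1 y.2 + hq4 y.1 x.2
  · intro x y z
    have g := hPL x.1 y.1 z.1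
    have h1 := hL2 x.1 y.1 z.2
    have h2 := hL3 x.1 z.1 y.2
    have h3 := hL3 y.1 z.1 x.2
    simp only [map_add, map_sub, map_neg, LinearMap.add_apply, LinearMap.sub_apply,
      LinearMap.neg_apply, Prod.fst_add, Prod.snd_add, Prod.fst_sub, Prod.snd_sub,
      Prod.fst_neg, Prod.snd_neg, Prod.mk_add_mk, Prod.mk_sub_mk, Prod.neg_mk, Prod.mk.injEq, hC', hbC'] at g h1 h2 h3 ⊢
    refine ⟨?_, ?_⟩
    · linear_combination (norm := module) g
    · linear_combination (norm := module) h1 + h2 - h3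
  · intro x y z
    have g := hC1 x.1 y.1 z.1
    have h1 := hP1 x.1 y.1 z.2
    have h2 := hP2 z.1 x.1 y.2
    have h3 := hP3 z.1 y.1 x.2
    simp only [map_add, map_sub, map_neg, LinearMap.add_apply, LinearMap.sub_apply,
      LinearMap.neg_apply, Prod.fst_add, Prod.snd_add, Prod.fst_sub, Prod.snd_sub,
      Prod.fst_neg, Prod.snd_neg, Prod.mk_add_mk, Prod.mk_sub_mk, Prod.neg_mk, Prod.mk.injEq, hC', hbC'] at g h1 h2 h3 ⊢
    refine ⟨?_, ?_⟩
    · linear_combination (norm := module) g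
    · linear_combination (norm := module) h1 + h2 + h3
  · intro x y z
    have g := hC2 x.1 y.1 z.1
    have h1 := hP4 x.1 y.1 z.2
    have h2 := hP5 y.1 z.1 x.2
    have h3 := hP6 x.1 z.1 y.2
    simp only [map_add, map_sub, map_neg, LinearMap.add_apply, LinearMap.sub_apply,
      LinearMap.neg_apply, Prod.fst_add, Prod.snd_add, Prod.fst_sub, Prod.snd_sub,
      Prod.fst_neg, Prod.snd_neg, Prod.mk_add_mk, Prod.mk_sub_mk, Prod.neg_mk, Prod.mk.injEq, hC', hbC'] at g h1 h2 h3 ⊢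
    refine ⟨?_, ?_⟩
    · linear_combination (norm := module) g
    · linear_combination (norm := module) h1 + h2 + h3
  · intro x y z
    have g := hC3 x.1 y.1 z.1
    have h1 := hP7 x.1 y.1 z.2
    have h2 := hP8 z.1 x.1 y.2
    have h3 := hP9 z.1 y.1 x.2
    simp only [map_add, map_sub, map_neg, LinearMap.add_apply, LinearMap.sub_apply,
      LinearMap.neg_apply, Prod.fst_add, Prod.snd_add, Prod.fst_sub, Prod.snd_sub,
      Prod.fst_neg, Prod.snd_neg, Prod.mk_add_mk, Prod.mk_sub_mk, Prod.neg_mk, Prod.mk.injEq, hC', hbC'] at g h1 h2 h3 ⊢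
    refine ⟨?_, ?_⟩
    · linear_combination (norm := module) g
    · linear_combination (norm := module) h1 + h2 + h3
end

section
/- Let T : V → A be an O-operator of a BiHom-associative algebra (A, ·, α₁, α₂) associated to a bimodule (l, r, β₁, β₂, V). Then V carries a BiHom-dendriform algebra structure with u≻v = l(T(u))v and u≺v = r(T(v))u, and structure maps β₁, β₂. -/
universe u

theorem stmt_15 {K A V : Type*} [Field K] [AddCommGroup A] [Module K A]
    [AddCommGroup V] [Module K V]
    (mul : A →ₗ[K] A →ₗ[K] A) (a1 a2 : A →ₗ[K] A)
    (l r : A →ₗ[K] V →ₗ[K] V) (b1 b2 : V →ₗ[K] V) (T : V →ₗ[K] A)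
    (hA : BHAssocAlg (fun x y => mul x y) (fun x => a1 x) (fun x => a2 x))
    (hbim : BHAssocBimod (fun x y => mul x y) (fun x => a1 x) (fun x => a2 x)
      (fun x v => l x v) (fun x v => r x v) (fun v => b1 v) (fun v => b2 v))
    (hT1 : ∀ v, a1 (T v) = T (b1 v)) (hT2 : ∀ v, a2 (T v) = T (b2 v))
    (hT : ∀ u v, mul (T u) (T v) = T (l (T u) v + r (T v) u)) :
    BHDendAlg (fun u v => r (T v) u) (fun u v => l (T u) v)
      (fun v => b1 v) (fun v => b2 v) := by
  obtain ⟨hc, hlm, hrm, hlr, hb1l, hb1r, hb2l, hb2r⟩ := hbim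
  simp only [] at hc hlm hrm hlr hb1l hb1r hb2l hb2r
  refine ⟨hc, ?_, ?_, ?_, ?_, ?_, ?_, ?_⟩
  · intro x y; beta_reduce; rw [hb1r, hT1]
  · intro x y; beta_reduce; rw [hb2r, hT2]
  · intro x y; beta_reduce; rw [hb1l, hT1]
  · intro x y; beta_reduce; rw [hb2l, hT2]
  · intro x y z; beta_reduce
    have h := hrm (T y) (T z) x
    rw [hT2] at h
    rw [← h, hT]
    congr 2
    rw [add_comm]
  · intro x y z; beta_reduce
    have h := hlr (T x) (T z) y
    rw [hT1, hT2] at h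
    exact h.symm
  · intro x y z; beta_reduce
    have h := hlm (T x) (T y) z
    rw [hT1, hT] at h
    rw [← h]
    congr 2
    rw [add_comm]
end

section
/- Let T : V → A be an O-operator of a BiHom-Lie algebra (A, {·,·}, α₁, α₂) with respect to a representation (ρ, β₁, β₂, V). Then (V, ∗, β₁, β₂) with u∗v := ρ(T(u))v is a BiHom-pre-Lie algebra. -/
universe u

theorem stmt_16 {K A V : Type*} [Field K] [AddCommGroup A] [Module K A]
    [AddCommGroup V] [Module K V]
    (br : A →ₗ[K] A →ₗ[K] A) (a1 a2 : A →ₗ[K] A)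
    (ρ : A →ₗ[K] V →ₗ[K] V) (b1 b2 b1inv b2inv : V →ₗ[K] V) (T : V →ₗ[K] A)
    (hA : BHLieAlg (fun x y => br x y) (fun x => a1 x) (fun x => a2 x))
    (hrep : BHLieRep (fun x y => br x y) (fun x => a1 x) (fun x => a2 x)
      (fun x v => ρ x v) (fun v => b1 v) (fun v => b2 v))
    (hb1l : ∀ v, b1inv (b1 v) = v) (hb1r : ∀ v, b1 (b1inv v) = v)
    (hb2l : ∀ v, b2inv (b2 v) = v) (hb2r : ∀ v, b2 (b2inv v) = v)
    (hT1 : ∀ v, a1 (T v) = T (b1 v)) (hT2 : ∀ v, a2 (T v) = T (b2 v))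
    (hT : ∀ u v, br (T u) (T v) =
      T (ρ (T u) v - ρ (T (b1inv (b2 v))) (b1 (b2inv u)))) :
    BHPreLieAlg (fun u v => ρ (T u) v) (fun v => b1 v) (fun v => b2 v) := by
  obtain ⟨hcomm, hrepeq, hρ1, hρ2⟩ := hrep
  refine ⟨hcomm, ?_, ?_, ?_⟩
  · intro u v
    simp only at hρ1 ⊢
    rw [hρ1, hT1]
  · intro u v
    simp only at hρ2 ⊢
    rw [hρ2, hT2]
  · intro x y z
    simp only at hrepeq hcomm ⊢
    have hc : ∀ v : V, b1 (b2 v) = b2 (b1 v) := fun v => hcomm v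
    have key := hrepeq (T x) (T (b1 y)) z
    rw [hT2, hT (b2 x) (b1 y)] at key
    have e1 : b1inv (b2 (b1 y)) = b2 y := by rw [← hc, hb1l]
    have e2 : b1 (b2inv (b2 x)) = b1 x := by rw [hb2l]
    rw [e1, e2, hT1, hT2, ← hc, hT1, map_sub T, map_sub ρ,
      LinearMap.sub_apply] at key
    rw [sub_eq_sub_iff_sub_eq_sub]
    exact key
end
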